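/- arXiv:2301.10873 — 3 statements merged into one kernel-verified Lean document; each statement's English description precedes it below -/
import Mathlib

section
/- Let T > 0, L ≥ 0, let δ > 0 be such that T/δ is a positive integer, let Q ∈ ℝ^{n×n} be positive semidefinite, and let w : [0,T] → ℝ^n be such that t ↦ w(t)w(t)^T is entrywise Lebesgue integrable and either (i) w is L-square Lipschitz or (ii) V_0^T(w) ≤ (1/2)LT. If ∫_0^T w(t)w(t)^T dt ≤ Q in the Loewner order, then δ · Σ_{k=0}^{T/δ−1} w(kδ)w(kδ)^T ≤ Q + (1/2)δTL·I_n. -/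
open MeasureTheory Matrix

noncomputable def opNorm {ι κ : Type} [Fintype ι] [Fintype κ] [DecidableEq κ]
    (M : Matrix ι κ ℝ) : ℝ :=
  ‖LinearMap.toContinuousLinearMap (Matrix.toEuclideanLin M)‖

noncomputable def euclNorm {ι : Type} [Fintype ι] (v : ι → ℝ) : ℝ :=
  Real.sqrt (∑ i, v i ^ 2)

/-- `v` is `L`-square Lipschitz on `[0,T]`. -/
def SqLipschitz {ι : Type} [Fintype ι] [DecidableEq ι] (T L : ℝ) (v : ℝ → ι → ℝ) : Prop :=
  ∀ t₁ ∈ Set.Icc (0:ℝ) T, ∀ t₂ ∈ Set.Icc (0:ℝ) T,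
    opNorm (Matrix.vecMulVec (v t₁) (v t₁) - Matrix.vecMulVec (v t₂) (v t₂)) ≤ L * |t₁ - t₂|

/-- The set of all partition sums appearing in the definition of total square variation. -/
def partitionSums {ι : Type} [Fintype ι] [DecidableEq ι] (T : ℝ) (v : ℝ → ι → ℝ) : Set ℝ :=
  { s | ∃ (N : ℕ) (t : Fin (N + 1) → ℝ), Monotone t ∧ t 0 = 0 ∧ t (Fin.last N) = T ∧
      s = ∑ i : Fin N, opNorm (Matrix.vecMulVec (v (t i.succ)) (v (t i.succ)) -
            Matrix.vecMulVec (v (t i.castSucc)) (v (t i.castSucc))) }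

/-- Total square variation `V_0^T(v)`. -/
noncomputable def totalSqVar {ι : Type} [Fintype ι] [DecidableEq ι] (T : ℝ) (v : ℝ → ι → ℝ) : ℝ :=
  sSup (partitionSums T v)

/-- `V_0^T(v) ≤ c`, phrased via all partition sums. -/
def TotalSqVarLE {ι : Type} [Fintype ι] [DecidableEq ι] (T : ℝ) (v : ℝ → ι → ℝ) (c : ℝ) : Prop :=
  ∀ s ∈ partitionSums T v, s ≤ c

/-- Loewner order `M ≤ N`. -/
def loewnerLE {ι : Type} [Fintype ι] (M N : Matrix ι ι ℝ) : Prop := (N - M).PosSemidef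

/-- Strict Loewner order `M < N`. -/
def loewnerLT {ι : Type} [Fintype ι] (M N : Matrix ι ι ℝ) : Prop := (N - M).PosDef

/-- `M` is negative definite. -/
def negDefQ {ι : Type} [Fintype ι] (M : Matrix ι ι ℝ) : Prop := (-M).PosDef

/-- Entrywise Lebesgue integral of a matrix-valued function on `[0,T]`. -/
noncomputable def matIntegral {ι κ : Type} (T : ℝ) (f : ℝ → Matrix ι κ ℝ) : Matrix ι κ ℝ :=
  Matrix.of fun i j => ∫ t in Set.Ioc (0:ℝ) T, f t i j

/-- `δ • Σ_{k<N} v(kδ) v(kδ)ᵀ`. -/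
noncomputable def sampledGram {ι : Type} [Fintype ι] (δ : ℝ) (N : ℕ) (v : ℝ → ι → ℝ) :
    Matrix ι ι ℝ :=
  δ • ∑ k ∈ Finset.range N, Matrix.vecMulVec (v (k * δ)) (v (k * δ))

/-- The noise signal `ẋ − Ax − Bu` associated with a candidate system `(A,B)`. -/
def noiseSig {n m : ℕ} (xdot x : ℝ → Fin n → ℝ) (u : ℝ → Fin m → ℝ)
    (A : Matrix (Fin n) (Fin n) ℝ) (B : Matrix (Fin n) (Fin m) ℝ) : ℝ → Fin n → ℝ :=
  fun t => xdot t - A.mulVec (x t) - B.mulVec (u t)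

/-- `Σ(Q')`: systems consistent with the continuous-time data. -/
def SigmaCont {n m : ℕ} (T : ℝ) (xdot x : ℝ → Fin n → ℝ) (u : ℝ → Fin m → ℝ)
    (Q' : Matrix (Fin n) (Fin n) ℝ) :
    Set (Matrix (Fin n) (Fin n) ℝ × Matrix (Fin n) (Fin m) ℝ) :=
  { AB | loewnerLE (matIntegral T fun t =>
      Matrix.vecMulVec (noiseSig xdot x u AB.1 AB.2 t) (noiseSig xdot x u AB.1 AB.2 t)) Q' }

/-- `Σ^δ(Q')`: systems consistent with the data sampled at stepsize `δ` (with `N = T/δ` samples). -/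
def SigmaDisc {n m : ℕ} (δ : ℝ) (N : ℕ) (xdot x : ℝ → Fin n → ℝ) (u : ℝ → Fin m → ℝ)
    (Q' : Matrix (Fin n) (Fin n) ℝ) :
    Set (Matrix (Fin n) (Fin n) ℝ × Matrix (Fin n) (Fin m) ℝ) :=
  { AB | loewnerLE (sampledGram δ N (noiseSig xdot x u AB.1 AB.2)) Q' }

/-- `M^L_{x,u}`: systems whose associated noise is `L`-square Lipschitz. -/
def Mset {n m : ℕ} (T L : ℝ) (xdot x : ℝ → Fin n → ℝ) (u : ℝ → Fin m → ℝ) :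
    Set (Matrix (Fin n) (Fin n) ℝ × Matrix (Fin n) (Fin m) ℝ) :=
  { AB | SqLipschitz T L (noiseSig xdot x u AB.1 AB.2) }

/-- `N^L_{x,u}`: systems whose associated noise has total square variation at most `LT/2`. -/
def Nset {n m : ℕ} (T L : ℝ) (xdot x : ℝ → Fin n → ℝ) (u : ℝ → Fin m → ℝ) :
    Set (Matrix (Fin n) (Fin n) ℝ × Matrix (Fin n) (Fin m) ℝ) :=
  { AB | TotalSqVarLE T (noiseSig xdot x u AB.1 AB.2) (L * T / 2) }

/-- The stacked signal `ξ(t) = (ẋ(t); −x(t); −u(t))`. -/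
def xiSig {n m : ℕ} (xdot x : ℝ → Fin n → ℝ) (u : ℝ → Fin m → ℝ) (t : ℝ) :
    (Fin n ⊕ (Fin n ⊕ Fin m)) → ℝ :=
  Sum.elim (xdot t) (Sum.elim (fun i => -(x t i)) (fun j => -(u t j)))

/-- The block matrix `[[Q + βI, P, PKᵀ], [P, 0, 0], [KP, 0, 0]]`. -/
noncomputable def lmiBlock {n m : ℕ} (Q P : Matrix (Fin n) (Fin n) ℝ)
    (K : Matrix (Fin m) (Fin n) ℝ) (β : ℝ) :
    Matrix (Fin n ⊕ (Fin n ⊕ Fin m)) (Fin n ⊕ (Fin n ⊕ Fin m)) ℝ :=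
  Matrix.fromBlocks (Q + β • (1 : Matrix (Fin n) (Fin n) ℝ))
    (Matrix.of fun i jj => Sum.elim (fun j => P i j) (fun j => (P * K.transpose) i j) jj)
    (Matrix.of fun ii j => Sum.elim (fun i => P i j) (fun k => (K * P) k j) ii)
    0

/-- The continuous-data LMI. -/
def ContLMI {n m : ℕ} (T : ℝ) (xdot x : ℝ → Fin n → ℝ) (u : ℝ → Fin m → ℝ)
    (Q P : Matrix (Fin n) (Fin n) ℝ) (K : Matrix (Fin m) (Fin n) ℝ) (β : ℝ) : Prop :=
  (matIntegral T (fun t => Matrix.vecMulVec (xiSig xdot x u t) (xiSig xdot x u t)) -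
    lmiBlock Q P K β).PosSemidef

/-- The sampled-data LMI at stepsize `δ` (with `N = T/δ` samples). -/
def SampLMI {n m : ℕ} (δ : ℝ) (N : ℕ) (xdot x : ℝ → Fin n → ℝ) (u : ℝ → Fin m → ℝ)
    (Q P : Matrix (Fin n) (Fin n) ℝ) (K : Matrix (Fin m) (Fin n) ℝ) (β : ℝ) : Prop :=
  (sampledGram δ N (xiSig xdot x u) - lmiBlock Q P K β).PosSemidef

section Helpers

lemma opNorm_nonneg' {ι κ : Type} [Fintype ι] [Fintype κ] [DecidableEq κ]
    (M : Matrix ι κ ℝ) : 0 ≤ opNorm M := norm_nonneg _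

lemma opNorm_sub_comm {ι κ : Type} [Fintype ι] [Fintype κ] [DecidableEq κ]
    (A B : Matrix ι κ ℝ) : opNorm (A - B) = opNorm (B - A) := by
  unfold opNorm
  rw [map_sub, map_sub, map_sub, map_sub, norm_sub_rev]

lemma quad_vmv {n : ℕ} (v x : Fin n → ℝ) :
    x ⬝ᵥ (Matrix.vecMulVec v v) *ᵥ x = (v ⬝ᵥ x) ^ 2 := by
  simp only [Matrix.vecMulVec, Matrix.mulVec, dotProduct, Matrix.of_apply, sq,
    Finset.sum_mul, Finset.mul_sum]
  exact Finset.sum_congr rfl fun i _ => Finset.sum_congr rfl fun j _ => by ring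

lemma quad_sum {n : ℕ} {α : Type*} (s : Finset α) (M : α → Matrix (Fin n) (Fin n) ℝ)
    (x : Fin n → ℝ) : x ⬝ᵥ (∑ k ∈ s, M k) *ᵥ x = ∑ k ∈ s, x ⬝ᵥ (M k) *ᵥ x := by
  classical
  induction s using Finset.induction_on with
  | empty => simp [Matrix.zero_mulVec]
  | insert _ _ hk ih =>
    rw [Finset.sum_insert hk, Finset.sum_insert hk, Matrix.add_mulVec, dotProduct_add, ih]

lemma quad_le_opNorm {n : ℕ} (M : Matrix (Fin n) (Fin n) ℝ) (x : Fin n → ℝ) :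
    x ⬝ᵥ M *ᵥ x ≤ opNorm M * ∑ i, x i ^ 2 := by
  set x' : EuclideanSpace ℝ (Fin n) := (WithLp.equiv 2 (Fin n → ℝ)).symm x with hx'
  have hnx : ‖x'‖ ^ 2 = ∑ i, x i ^ 2 := by
    rw [EuclideanSpace.norm_eq, Real.sq_sqrt (by positivity)]
    simp [hx', WithLp.equiv_symm_apply, PiLp.toLp_apply, Real.norm_eq_abs, sq_abs]
  have h1 : x ⬝ᵥ M *ᵥ x = inner ℝ x' (Matrix.toEuclideanLin M x') := by
    rw [Matrix.toEuclideanLin_apply]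
    simp [PiLp.inner_apply, dotProduct, hx', WithLp.equiv_symm_apply, PiLp.toLp_apply,
      RCLike.inner_apply, mul_comm]
  have h2 : ‖Matrix.toEuclideanLin M x'‖ ≤ opNorm M * ‖x'‖ := by
    have h := (LinearMap.toContinuousLinearMap (Matrix.toEuclideanLin M)).le_opNorm x'
    rwa [LinearMap.coe_toContinuousLinearMap'] at h
  calc x ⬝ᵥ M *ᵥ x = inner ℝ x' (Matrix.toEuclideanLin M x') := h1
    _ ≤ ‖x'‖ * ‖Matrix.toEuclideanLin M x'‖ := real_inner_le_norm _ _
    _ ≤ ‖x'‖ * (opNorm M * ‖x'‖) := by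
        exact mul_le_mul_of_nonneg_left h2 (norm_nonneg _)
    _ = opNorm M * ‖x'‖ ^ 2 := by ring
    _ = opNorm M * ∑ i, x i ^ 2 := by rw [hnx]

lemma quad_matIntegral {n : ℕ} (T : ℝ) (f : ℝ → Matrix (Fin n) (Fin n) ℝ)
    (hint : ∀ i j, MeasureTheory.IntegrableOn (fun t => f t i j) (Set.Ioc (0:ℝ) T))
    (x : Fin n → ℝ) :
    x ⬝ᵥ (matIntegral T f) *ᵥ x = ∫ t in Set.Ioc (0:ℝ) T, x ⬝ᵥ (f t) *ᵥ x := by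
  have hexp : ∀ (M : Matrix (Fin n) (Fin n) ℝ),
      x ⬝ᵥ M *ᵥ x = ∑ i, ∑ j, x i * x j * M i j := by
    intro M
    simp only [dotProduct, Matrix.mulVec, Finset.mul_sum]
    exact Finset.sum_congr rfl fun i _ => Finset.sum_congr rfl fun j _ => by ring
  rw [hexp]
  have h2 : (∫ t in Set.Ioc (0:ℝ) T, x ⬝ᵥ (f t) *ᵥ x)
      = ∫ t in Set.Ioc (0:ℝ) T, ∑ i, ∑ j, x i * x j * f t i j := by
    congr 1; funext t; exact hexp (f t)
  rw [h2, MeasureTheory.integral_finset_sum]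
  · refine Finset.sum_congr rfl fun i _ => ?_
    rw [MeasureTheory.integral_finset_sum]
    · refine Finset.sum_congr rfl fun j _ => ?_
      rw [MeasureTheory.integral_const_mul]
      simp [matIntegral]
    · exact fun j _ => (hint i j).const_mul _
  · exact fun i _ => MeasureTheory.integrable_finset_sum _ fun j _ => (hint i j).const_mul _

end Helpers
theorem stmt7 {n : ℕ} (T L δ : ℝ) (hT : 0 < T) (hL : 0 ≤ L) (hδ : 0 < δ)
    (N : ℕ) (hN : 0 < N) (hTN : T = N * δ)
    (Q : Matrix (Fin n) (Fin n) ℝ) (hQ : Q.PosSemidef)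
    (w : ℝ → Fin n → ℝ)
    (hint : ∀ i j, MeasureTheory.IntegrableOn
      (fun t => Matrix.vecMulVec (w t) (w t) i j) (Set.Ioc (0:ℝ) T))
    (hnoise : SqLipschitz T L w ∨ TotalSqVarLE T w (L * T / 2))
    (h : loewnerLE (matIntegral T (fun t => Matrix.vecMulVec (w t) (w t))) Q) :
    loewnerLE (sampledGram δ N w)
      (Q + (δ * T * L / 2) • (1 : Matrix (Fin n) (Fin n) ℝ)) := by
  have key : ∀ x : Fin n → ℝ,
      δ * ∑ k ∈ Finset.range N, (w ((k:ℝ)*δ) ⬝ᵥ x) ^ 2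
        ≤ (∫ t in Set.Ioc (0:ℝ) T, (w t ⬝ᵥ x) ^ 2) + (δ * T * L / 2) * ∑ i, x i ^ 2 := by
    intro x
    set nx : ℝ := ∑ i, x i ^ 2 with hnx
    have hnx0 : 0 ≤ nx := Finset.sum_nonneg fun i _ => sq_nonneg _
    set g : ℝ → ℝ := fun t => (w t ⬝ᵥ x) ^ 2 with hg
    have hgint : MeasureTheory.IntegrableOn g (Set.Ioc (0:ℝ) T) := by
      have hge : g = fun t => ∑ i, ∑ j, x i * x j * (Matrix.vecMulVec (w t) (w t)) i j := by
        funext t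
        rw [hg]
        show (w t ⬝ᵥ x) ^ 2 = _
        rw [← quad_vmv (w t) x]
        simp only [dotProduct, Matrix.mulVec, Matrix.vecMulVec, Matrix.of_apply, Finset.mul_sum]
        exact Finset.sum_congr rfl fun i _ => Finset.sum_congr rfl fun j _ => by ring
      rw [hge]
      exact MeasureTheory.integrable_finset_sum _ fun i _ =>
        MeasureTheory.integrable_finset_sum _ fun j _ => (hint i j).const_mul _
    have habk : ∀ k : ℕ, (k:ℝ)*δ ≤ ((k:ℝ)+1)*δ := by
      intro k; nlinarith [hδ.le]
    have hsub : ∀ k : ℕ, k < N → Set.Ioc ((k:ℝ)*δ) (((k:ℝ)+1)*δ) ⊆ Set.Ioc 0 T := by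
      intro k hk
      apply Set.Ioc_subset_Ioc
      · positivity
      · rw [hTN]
        have hk1 : (k:ℝ) + 1 ≤ (N:ℝ) := by exact_mod_cast hk
        nlinarith
    have hik : ∀ k : ℕ, k < N →
        IntervalIntegrable g MeasureTheory.volume ((k:ℝ)*δ) (((k:ℝ)+1)*δ) := by
      intro k hk
      rw [intervalIntegrable_iff_integrableOn_Ioc_of_le (habk k)]
      exact hgint.mono_set (hsub k hk)
    have hIccT : ∀ k : ℕ, k < N → ∀ t ∈ Set.Icc ((k:ℝ)*δ) (((k:ℝ)+1)*δ),
        ((k:ℝ)*δ ∈ Set.Icc (0:ℝ) T ∧ t ∈ Set.Icc (0:ℝ) T) := by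
      intro k hk t ht
      have hk0 : (0:ℝ) ≤ (k:ℝ)*δ := by positivity
      have hk1 : (k:ℝ) + 1 ≤ (N:ℝ) := by exact_mod_cast hk
      have htT : t ≤ T := by rw [hTN]; nlinarith [ht.2]
      exact ⟨⟨hk0, le_trans ht.1 htT⟩, ⟨le_trans hk0 ht.1, htT⟩⟩
    have hsplit : ∑ k ∈ Finset.range N, ∫ t in ((k:ℝ)*δ)..(((k:ℝ)+1)*δ), g t
        = ∫ t in Set.Ioc (0:ℝ) T, g t := by
      have h1 : ∑ k ∈ Finset.range N, ∫ t in (((k:ℕ):ℝ)*δ)..((((k+1):ℕ):ℝ)*δ), g t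
          = ∫ t in (((0:ℕ):ℝ)*δ)..(((N:ℕ):ℝ)*δ), g t := by
        apply intervalIntegral.sum_integral_adjacent_intervals
        intro k hk
        have he : ((((k+1):ℕ)):ℝ)*δ = ((k:ℝ)+1)*δ := by push_cast; ring
        rw [he]
        exact hik k hk
      have h2 : ∀ k ∈ Finset.range N, (∫ t in (((k:ℕ):ℝ)*δ)..((((k+1):ℕ):ℝ)*δ), g t)
          = ∫ t in ((k:ℝ)*δ)..(((k:ℝ)+1)*δ), g t := by
        intro k _
        congr 1
        push_cast
        ring
      rw [Finset.sum_congr rfl h2] at h1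
      rw [h1]
      have h0 : (((0:ℕ):ℝ))*δ = 0 := by norm_num
      have hN' : (((N:ℕ):ℝ))*δ = T := hTN.symm
      rw [h0, hN', intervalIntegral.integral_of_le hT.le]
    have hDk : ∀ k : ℕ, k < N →
        δ * g ((k:ℝ)*δ) - (∫ t in ((k:ℝ)*δ)..(((k:ℝ)+1)*δ), g t)
          = ∫ t in ((k:ℝ)*δ)..(((k:ℝ)+1)*δ), (g ((k:ℝ)*δ) - g t) := by
      intro k hk
      rw [intervalIntegral.integral_sub intervalIntegrable_const (hik k hk),
        intervalIntegral.integral_const, smul_eq_mul]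
      ring
    have hpt : ∀ a b : ℝ, g a - g b ≤
        opNorm (Matrix.vecMulVec (w a) (w a) - Matrix.vecMulVec (w b) (w b)) * nx := by
      intro a b
      have h1 : g a - g b =
          x ⬝ᵥ (Matrix.vecMulVec (w a) (w a) - Matrix.vecMulVec (w b) (w b)) *ᵥ x := by
        rw [Matrix.sub_mulVec, dotProduct_sub, quad_vmv, quad_vmv]
      rw [h1, hnx]
      exact quad_le_opNorm _ _
    have hB : ∑ k ∈ Finset.range N, (∫ t in ((k:ℝ)*δ)..(((k:ℝ)+1)*δ), (g ((k:ℝ)*δ) - g t))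
        ≤ δ * T * L / 2 * nx := by
      rcases hnoise with hLip | hVar
      · -- Lipschitz case
        have hterm : ∀ k ∈ Finset.range N,
            (∫ t in ((k:ℝ)*δ)..(((k:ℝ)+1)*δ), (g ((k:ℝ)*δ) - g t)) ≤ L * nx * δ^2 / 2 := by
          intro k hk'
          rw [Finset.mem_range] at hk'
          have hIcc : ∀ t ∈ Set.Icc ((k:ℝ)*δ) (((k:ℝ)+1)*δ),
              g ((k:ℝ)*δ) - g t ≤ L * (t - (k:ℝ)*δ) * nx := by
            intro t ht
            obtain ⟨hkmem, htmem⟩ := hIccT k hk' t ht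
            have h3 := hLip ((k:ℝ)*δ) hkmem t htmem
            have h4 : |(k:ℝ)*δ - t| = t - (k:ℝ)*δ := by
              rw [abs_sub_comm, abs_of_nonneg (by linarith [ht.1])]
            rw [h4] at h3
            calc g ((k:ℝ)*δ) - g t ≤ _ * nx := hpt _ _
              _ ≤ (L * (t - (k:ℝ)*δ)) * nx := mul_le_mul_of_nonneg_right h3 hnx0
              _ = L * (t - (k:ℝ)*δ) * nx := by ring
          have hint2 : IntervalIntegrable (fun t => L * (t - (k:ℝ)*δ) * nx)
              MeasureTheory.volume ((k:ℝ)*δ) (((k:ℝ)+1)*δ) := by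
            apply Continuous.intervalIntegrable
            fun_prop
          have hint1 : IntervalIntegrable (fun t => g ((k:ℝ)*δ) - g t)
              MeasureTheory.volume ((k:ℝ)*δ) (((k:ℝ)+1)*δ) :=
            intervalIntegrable_const.sub (hik k hk')
          have hle := intervalIntegral.integral_mono_on (habk k) hint1 hint2 hIcc
          have hcalc : (∫ t in ((k:ℝ)*δ)..(((k:ℝ)+1)*δ), L * (t - (k:ℝ)*δ) * nx)
              = L * nx * δ^2 / 2 := by
            have he : (fun t => L * (t - (k:ℝ)*δ) * nx) = fun t => (t - (k:ℝ)*δ) * (L * nx) := by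
              funext t; ring
            rw [he, intervalIntegral.integral_mul_const,
              intervalIntegral.integral_comp_sub_right (fun s => s) ((k:ℝ)*δ)]
            have e1 : (k:ℝ)*δ - (k:ℝ)*δ = 0 := by ring
            have e2 : ((k:ℝ)+1)*δ - (k:ℝ)*δ = δ := by ring
            rw [e1, e2, integral_id]
            ring
          rw [hcalc] at hle
          exact hle
        calc ∑ k ∈ Finset.range N, (∫ t in ((k:ℝ)*δ)..(((k:ℝ)+1)*δ), (g ((k:ℝ)*δ) - g t))
            ≤ ∑ _k ∈ Finset.range N, L * nx * δ^2 / 2 := Finset.sum_le_sum hterm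
          _ = (N:ℝ) * (L * nx * δ^2 / 2) := by
              rw [Finset.sum_const, Finset.card_range, nsmul_eq_mul]
          _ = δ * T * L / 2 * nx := by rw [hTN]; ring
      · -- variation case
        set s : ℕ → ℝ := fun k => sSup ((fun t =>
            opNorm (Matrix.vecMulVec (w ((k:ℝ)*δ)) (w ((k:ℝ)*δ)) -
              Matrix.vecMulVec (w t) (w t))) ''
            Set.Icc ((k:ℝ)*δ) (((k:ℝ)+1)*δ)) with hs
        have hne : ∀ k : ℕ, ((fun t =>
            opNorm (Matrix.vecMulVec (w ((k:ℝ)*δ)) (w ((k:ℝ)*δ)) -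
              Matrix.vecMulVec (w t) (w t))) ''
            Set.Icc ((k:ℝ)*δ) (((k:ℝ)+1)*δ)).Nonempty :=
          fun k => (Set.nonempty_Icc.mpr (habk k)).image _
        have hub : ∀ k : ℕ, k < N → ∀ y ∈ ((fun t =>
            opNorm (Matrix.vecMulVec (w ((k:ℝ)*δ)) (w ((k:ℝ)*δ)) -
              Matrix.vecMulVec (w t) (w t))) ''
            Set.Icc ((k:ℝ)*δ) (((k:ℝ)+1)*δ)), y ≤ L * T / 2 := by
          rintro k hk y ⟨t, ht, rfl⟩
          obtain ⟨hkmem, htmem⟩ := hIccT k hk t ht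
          set p : Fin 4 → ℝ := ![0, (k:ℝ)*δ, t, T] with hp
          have hpmono : Monotone p := by
            rw [Fin.monotone_iff_le_succ]
            intro i
            fin_cases i <;>
              simp [hp, Fin.succ] <;>
              [exact hkmem.1; exact ht.1; exact htmem.2]
          have hmem : (∑ i : Fin 3, opNorm (Matrix.vecMulVec (w (p i.succ)) (w (p i.succ)) -
              Matrix.vecMulVec (w (p i.castSucc)) (w (p i.castSucc)))) ∈ partitionSums T w := by
            refine ⟨3, p, hpmono, ?_, ?_, rfl⟩
            · simp [hp]
            · simp [hp, Fin.last]
          have hSb := hVar _ hmem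
          have hexp : (∑ i : Fin 3, opNorm (Matrix.vecMulVec (w (p i.succ)) (w (p i.succ)) -
              Matrix.vecMulVec (w (p i.castSucc)) (w (p i.castSucc))))
              = opNorm (Matrix.vecMulVec (w ((k:ℝ)*δ)) (w ((k:ℝ)*δ)) -
                  Matrix.vecMulVec (w 0) (w 0))
              + opNorm (Matrix.vecMulVec (w t) (w t) -
                  Matrix.vecMulVec (w ((k:ℝ)*δ)) (w ((k:ℝ)*δ)))
              + opNorm (Matrix.vecMulVec (w T) (w T) -
                  Matrix.vecMulVec (w t) (w t)) := by
            rw [Fin.sum_univ_three]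
            rfl
          rw [hexp] at hSb
          have h1 := opNorm_nonneg' (Matrix.vecMulVec (w ((k:ℝ)*δ)) (w ((k:ℝ)*δ)) -
            Matrix.vecMulVec (w 0) (w 0))
          have h2 := opNorm_nonneg' (Matrix.vecMulVec (w T) (w T) -
            Matrix.vecMulVec (w t) (w t))
          show opNorm (Matrix.vecMulVec (w ((k:ℝ)*δ)) (w ((k:ℝ)*δ)) -
            Matrix.vecMulVec (w t) (w t)) ≤ L * T / 2
          rw [opNorm_sub_comm]
          linarith
        have hbdd : ∀ k : ℕ, k < N → BddAbove ((fun t =>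
            opNorm (Matrix.vecMulVec (w ((k:ℝ)*δ)) (w ((k:ℝ)*δ)) -
              Matrix.vecMulVec (w t) (w t))) ''
            Set.Icc ((k:ℝ)*δ) (((k:ℝ)+1)*δ)) :=
          fun k hk => ⟨L * T / 2, fun y hy => hub k hk y hy⟩
        have hSs : ∑ k ∈ Finset.range N, s k ≤ L * T / 2 := by
          refine le_of_forall_pos_le_add fun ε hε => ?_
          have hεN : 0 < ε / N := by positivity
          have hch : ∀ k : ℕ, ∃ tk, tk ∈ Set.Icc ((k:ℝ)*δ) (((k:ℝ)+1)*δ) ∧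
              (k < N → s k - ε / N ≤
                opNorm (Matrix.vecMulVec (w ((k:ℝ)*δ)) (w ((k:ℝ)*δ)) -
                  Matrix.vecMulVec (w tk) (w tk))) := by
            intro k
            by_cases hk : k < N
            · obtain ⟨y, hy, hy2⟩ := exists_lt_of_lt_csSup (hne k)
                (show s k - ε/N < s k by linarith)
              obtain ⟨tk, htk, rfl⟩ := hy
              exact ⟨tk, htk, fun _ => hy2.le⟩
            · exact ⟨(k:ℝ)*δ, Set.left_mem_Icc.mpr (habk k), fun hkN => absurd hkN hk⟩
          choose tk htk1 htk2 using hch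
          set q : ℕ → ℝ := fun m => if m % 2 = 0 then ((m/2 : ℕ):ℝ)*δ else tk (m/2) with hq
          have hqe : ∀ k : ℕ, q (2*k) = (k:ℝ)*δ := by
            intro k
            have h1 : (2*k) % 2 = 0 := by omega
            have h2 : (2*k) / 2 = k := by omega
            simp [hq, h1, h2]
          have hqo : ∀ k : ℕ, q (2*k+1) = tk k := by
            intro k
            have h1 : (2*k+1) % 2 = 1 := by omega
            have h2 : (2*k+1) / 2 = k := by omega
            simp [hq, h1, h2]
          have hmono : Monotone (fun i : Fin (2*N+1) => q i.val) := by
            rw [Fin.monotone_iff_le_succ]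
            intro i
            simp only [Fin.coe_castSucc, Fin.val_succ]
            rcases Nat.even_or_odd i.val with ⟨k, hk⟩ | ⟨k, hk⟩
            · have e1 : i.val = 2*k := by omega
              have e2 : i.val + 1 = 2*k+1 := by omega
              rw [e2, e1, hqe, hqo]
              exact (htk1 k).1
            · have e1 : i.val = 2*k+1 := by omega
              have e2 : i.val + 1 = 2*(k+1) := by omega
              rw [e2, e1, hqo, hqe]
              have h5 := (htk1 k).2
              push_cast
              linarith
          have hmem : (∑ i : Fin (2*N), opNorm
              (Matrix.vecMulVec (w (q i.succ.val)) (w (q i.succ.val)) -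
               Matrix.vecMulVec (w (q i.castSucc.val)) (w (q i.castSucc.val))))
              ∈ partitionSums T w := by
            refine ⟨2*N, fun i => q i.val, hmono, ?_, ?_, rfl⟩
            · show q ((0 : Fin (2*N+1)) : ℕ) = 0
              have : ((0 : Fin (2*N+1)) : ℕ) = 2*0 := by simp
              rw [this, hqe]
              norm_num
            · show q ((Fin.last (2*N)) : ℕ) = T
              have : ((Fin.last (2*N)) : ℕ) = 2*N := rfl
              rw [this, hqe]
              exact hTN.symm
          have hS := hVar _ hmem
          have hfin : (∑ i : Fin (2*N), opNorm
              (Matrix.vecMulVec (w (q i.succ.val)) (w (q i.succ.val)) -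
               Matrix.vecMulVec (w (q i.castSucc.val)) (w (q i.castSucc.val))))
              = ∑ m ∈ Finset.range (2*N), opNorm
              (Matrix.vecMulVec (w (q (m+1))) (w (q (m+1))) -
               Matrix.vecMulVec (w (q m)) (w (q m))) := by
            rw [← Fin.sum_univ_eq_sum_range]
            exact Finset.sum_congr rfl fun i _ => by simp [Fin.val_succ, Fin.coe_castSucc]
          have heven : ∑ k ∈ Finset.range N, opNorm
              (Matrix.vecMulVec (w (q (2*k+1))) (w (q (2*k+1))) -
               Matrix.vecMulVec (w (q (2*k))) (w (q (2*k))))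
              ≤ ∑ m ∈ Finset.range (2*N), opNorm
              (Matrix.vecMulVec (w (q (m+1))) (w (q (m+1))) -
               Matrix.vecMulVec (w (q m)) (w (q m))) := by
            have him : ∑ k ∈ Finset.range N, opNorm
                (Matrix.vecMulVec (w (q (2*k+1))) (w (q (2*k+1))) -
                 Matrix.vecMulVec (w (q (2*k))) (w (q (2*k))))
                = ∑ m ∈ (Finset.range N).image (fun k => 2*k), opNorm
                (Matrix.vecMulVec (w (q (m+1))) (w (q (m+1))) -
                 Matrix.vecMulVec (w (q m)) (w (q m))) := by
              rw [Finset.sum_image (fun a _ b _ hab => by omega)]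
            rw [him]
            apply Finset.sum_le_sum_of_subset_of_nonneg
            · intro m hm
              simp only [Finset.mem_image, Finset.mem_range] at hm ⊢
              obtain ⟨k, hk, rfl⟩ := hm
              omega
            · exact fun m _ _ => opNorm_nonneg' _
          have hkey : ∀ k ∈ Finset.range N, s k - ε/N ≤ opNorm
              (Matrix.vecMulVec (w (q (2*k+1))) (w (q (2*k+1))) -
               Matrix.vecMulVec (w (q (2*k))) (w (q (2*k)))) := by
            intro k hk
            rw [Finset.mem_range] at hk
            rw [hqo, hqe, opNorm_sub_comm]
            exact htk2 k hk
          have hNε : (N:ℝ) * (ε/N) = ε := by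
            field_simp
          calc ∑ k ∈ Finset.range N, s k
              = (∑ k ∈ Finset.range N, (s k - ε/N)) + (N:ℝ) * (ε/N) := by
                rw [Finset.sum_sub_distrib, Finset.sum_const, Finset.card_range, nsmul_eq_mul]
                ring
            _ ≤ (∑ k ∈ Finset.range N, opNorm
                (Matrix.vecMulVec (w (q (2*k+1))) (w (q (2*k+1))) -
                 Matrix.vecMulVec (w (q (2*k))) (w (q (2*k))))) + (N:ℝ) * (ε/N) :=
                add_le_add_left (Finset.sum_le_sum hkey) _
            _ ≤ (∑ m ∈ Finset.range (2*N), opNorm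
                (Matrix.vecMulVec (w (q (m+1))) (w (q (m+1))) -
                 Matrix.vecMulVec (w (q m)) (w (q m)))) + (N:ℝ) * (ε/N) :=
                add_le_add_left heven _
            _ ≤ L*T/2 + ε := by
                rw [hNε, ← hfin]
                exact add_le_add_left hS _
        have hDle : ∀ k ∈ Finset.range N,
            (∫ t in ((k:ℝ)*δ)..(((k:ℝ)+1)*δ), (g ((k:ℝ)*δ) - g t)) ≤ δ * (s k * nx) := by
          intro k hk
          rw [Finset.mem_range] at hk
          have hptk : ∀ t ∈ Set.Icc ((k:ℝ)*δ) (((k:ℝ)+1)*δ), g ((k:ℝ)*δ) - g t ≤ s k * nx := by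
            intro t ht
            have h1 := hpt ((k:ℝ)*δ) t
            have h2 : opNorm (Matrix.vecMulVec (w ((k:ℝ)*δ)) (w ((k:ℝ)*δ)) -
                Matrix.vecMulVec (w t) (w t)) ≤ s k :=
              le_csSup (hbdd k hk) ⟨t, ht, rfl⟩
            have h3 := mul_le_mul_of_nonneg_right h2 hnx0
            linarith
          have hint1 : IntervalIntegrable (fun t => g ((k:ℝ)*δ) - g t)
              MeasureTheory.volume ((k:ℝ)*δ) (((k:ℝ)+1)*δ) :=
            intervalIntegrable_const.sub (hik k hk)
          have hle := intervalIntegral.integral_mono_on (habk k) hint1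
            intervalIntegrable_const hptk
          rwa [intervalIntegral.integral_const, smul_eq_mul,
            show (((k:ℝ)+1)*δ - (k:ℝ)*δ) = δ by ring] at hle
        calc ∑ k ∈ Finset.range N, (∫ t in ((k:ℝ)*δ)..(((k:ℝ)+1)*δ), (g ((k:ℝ)*δ) - g t))
            ≤ ∑ k ∈ Finset.range N, δ * (s k * nx) := Finset.sum_le_sum hDle
          _ = δ * nx * ∑ k ∈ Finset.range N, s k := by
              rw [Finset.mul_sum]
              exact Finset.sum_congr rfl fun k _ => by ring
          _ ≤ δ * nx * (L * T / 2) :=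
              mul_le_mul_of_nonneg_left hSs (mul_nonneg hδ.le hnx0)
          _ = δ * T * L / 2 * nx := by ring
    have hstep : ∀ k ∈ Finset.range N, δ * g ((k:ℝ)*δ)
        = (∫ t in ((k:ℝ)*δ)..(((k:ℝ)+1)*δ), g t)
          + ∫ t in ((k:ℝ)*δ)..(((k:ℝ)+1)*δ), (g ((k:ℝ)*δ) - g t) := by
      intro k hk
      rw [Finset.mem_range] at hk
      linarith [hDk k hk]
    calc δ * ∑ k ∈ Finset.range N, (w ((k:ℝ)*δ) ⬝ᵥ x) ^ 2
        = ∑ k ∈ Finset.range N, δ * g ((k:ℝ)*δ) := by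
          rw [Finset.mul_sum]
      _ = ∑ k ∈ Finset.range N, ((∫ t in ((k:ℝ)*δ)..(((k:ℝ)+1)*δ), g t)
          + ∫ t in ((k:ℝ)*δ)..(((k:ℝ)+1)*δ), (g ((k:ℝ)*δ) - g t)) :=
          Finset.sum_congr rfl hstep
      _ = (∑ k ∈ Finset.range N, ∫ t in ((k:ℝ)*δ)..(((k:ℝ)+1)*δ), g t)
          + ∑ k ∈ Finset.range N, ∫ t in ((k:ℝ)*δ)..(((k:ℝ)+1)*δ), (g ((k:ℝ)*δ) - g t) :=
          Finset.sum_add_distrib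
      _ ≤ (∫ t in Set.Ioc (0:ℝ) T, g t) + δ * T * L / 2 * nx := by
          rw [hsplit]
          linarith [hB]
  -- assembly
  refine Matrix.posSemidef_iff_dotProduct_mulVec.mpr ⟨?_, ?_⟩
  · -- Hermitian
    have hGH : (sampledGram δ N w).IsHermitian := by
      show _ᴴ = _
      ext i j
      simp only [sampledGram, Matrix.conjTranspose_apply, Matrix.smul_apply, Matrix.sum_apply,
        Matrix.vecMulVec, Matrix.of_apply, smul_eq_mul, star_trivial]
      congr 1
      exact Finset.sum_congr rfl fun k _ => mul_comm _ _
    have h1H : ((δ * T * L / 2) • (1 : Matrix (Fin n) (Fin n) ℝ)).IsHermitian := by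
      show _ᴴ = _
      ext i j
      simp [Matrix.conjTranspose_apply, Matrix.one_apply, Matrix.smul_apply, eq_comm]
    exact (hQ.1.add h1H).sub hGH
  · intro x
    have hstar : star x = x := by
      funext i
      simp
    rw [hstar]
    have hG : x ⬝ᵥ (sampledGram δ N w) *ᵥ x
        = δ * ∑ k ∈ Finset.range N, (w ((k:ℝ)*δ) ⬝ᵥ x) ^ 2 := by
      show x ⬝ᵥ (δ • ∑ k ∈ Finset.range N,
        Matrix.vecMulVec (w ((k:ℝ) * δ)) (w ((k:ℝ) * δ))) *ᵥ x = _
      rw [Matrix.smul_mulVec, dotProduct_smul, smul_eq_mul, quad_sum]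
      congr 1
      exact Finset.sum_congr rfl fun k _ => quad_vmv _ _
    have hQle : (∫ t in Set.Ioc (0:ℝ) T, (w t ⬝ᵥ x) ^ 2) ≤ x ⬝ᵥ Q *ᵥ x := by
      have h2 := (Matrix.posSemidef_iff_dotProduct_mulVec.mp h).2 x
      rw [hstar, Matrix.sub_mulVec, dotProduct_sub] at h2
      have h3 := quad_matIntegral T (fun t => Matrix.vecMulVec (w t) (w t)) hint x
      have h4 : (∫ t in Set.Ioc (0:ℝ) T, x ⬝ᵥ (Matrix.vecMulVec (w t) (w t)) *ᵥ x)
          = ∫ t in Set.Ioc (0:ℝ) T, (w t ⬝ᵥ x) ^ 2 := by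
        congr 1
        funext t
        exact quad_vmv _ _
      rw [h3, h4] at h2
      linarith
    rw [Matrix.sub_mulVec, Matrix.add_mulVec, Matrix.smul_mulVec, Matrix.one_mulVec,
      dotProduct_sub, dotProduct_add, dotProduct_smul, smul_eq_mul, hG]
    have hxx : x ⬝ᵥ x = ∑ i, x i ^ 2 := by
      simp [dotProduct, sq]
    rw [hxx]
    linarith [key x, hQle]
end

section
/- Suppose the data (x,u) satisfy the standing data assumptions and let δ > 0 be such that T/δ is a positive integer. Then for every L ≥ 0, Σ^δ(Q) ∩ M^L_{x,u} ⊆ Σ(Q + (1/2)δTL·I_n); that is, every pair (A,B) for which δ · Σ_{k=0}^{T/δ−1} (ẋ(kδ) − A x(kδ) − B u(kδ))(ẋ(kδ) − A x(kδ) − B u(kδ))^T ≤ Q and for which ẋ − Ax − Bu is L-square Lipschitz satisfies ∫_0^T (ẋ(t) − A x(t) − B u(t))(ẋ(t) − A x(t) − B u(t))^T dt ≤ Q + (1/2)δTL·I_n. -/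
open MeasureTheory Matrix

section Aux

lemma abs_bilin_le {ι : Type} [Fintype ι] [DecidableEq ι] (M : Matrix ι ι ℝ) (z y : ι → ℝ) :
    |z ⬝ᵥ M.mulVec y| ≤ opNorm M * Real.sqrt (∑ i, z i ^ 2) * Real.sqrt (∑ i, y i ^ 2) := by
  set z' : EuclideanSpace ℝ ι := (WithLp.equiv 2 (ι → ℝ)).symm z with hz'
  set y' : EuclideanSpace ℝ ι := (WithLp.equiv 2 (ι → ℝ)).symm y with hy'
  set w := (LinearMap.toContinuousLinearMap (Matrix.toEuclideanLin M)) y' with hw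
  have hnz : ‖z'‖ = Real.sqrt (∑ i, z i ^ 2) := by
    rw [EuclideanSpace.norm_eq]; congr 1; simp [hz', sq_abs]
  have hny : ‖y'‖ = Real.sqrt (∑ i, y i ^ 2) := by
    rw [EuclideanSpace.norm_eq]; congr 1; simp [hy', sq_abs]
  have h1 : z ⬝ᵥ M.mulVec y = (inner ℝ z' w : ℝ) := by
    simp only [hw, LinearMap.coe_toContinuousLinearMap', hy', WithLp.equiv_symm_apply,
      Matrix.toEuclideanLin_apply_piLp_toLp]
    rw [real_inner_comm]
    simp [EuclideanSpace.inner_eq_star_dotProduct, hz', hy', dotProduct, mul_comm]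
  rw [h1]
  calc |(inner ℝ z' w : ℝ)| ≤ ‖z'‖ * ‖w‖ := abs_real_inner_le_norm _ _
    _ ≤ ‖z'‖ * (opNorm M * ‖y'‖) := by
        gcongr
        exact (LinearMap.toContinuousLinearMap (Matrix.toEuclideanLin M)).le_opNorm y'
    _ = opNorm M * ‖z'‖ * ‖y'‖ := by ring
    _ = _ := by rw [hnz, hny]

lemma abs_quad_le {ι : Type} [Fintype ι] [DecidableEq ι] (M : Matrix ι ι ℝ) (z : ι → ℝ) :
    |z ⬝ᵥ M.mulVec z| ≤ opNorm M * ∑ i, z i ^ 2 := by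
  have h := abs_bilin_le M z z
  rwa [mul_assoc, Real.mul_self_sqrt (by positivity)] at h

lemma abs_entry_le {ι : Type} [Fintype ι] [DecidableEq ι] (M : Matrix ι ι ℝ) (i j : ι) :
    |M i j| ≤ opNorm M := by
  have h := abs_bilin_le M (Pi.single i 1) (Pi.single j 1)
  simp [Pi.single_apply, Finset.sum_ite_eq'] at h
  simpa [dotProduct, Matrix.mulVec, Pi.single_apply, Finset.sum_ite_eq',
    mul_comm] using h

lemma quad_vecMulVec {ι : Type} [Fintype ι] (a z : ι → ℝ) :
    z ⬝ᵥ (Matrix.vecMulVec a a).mulVec z = (a ⬝ᵥ z) ^ 2 := by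
  simp [dotProduct, Matrix.mulVec, Matrix.vecMulVec_apply, Finset.mul_sum,
    Finset.sum_mul, sq]
  rw [Finset.sum_comm]
  congr 1; ext i; congr 1; ext j; ring

end Aux

theorem stmt8
    {n m : ℕ} (T : ℝ) (hT : 0 < T)
    (x xdot : ℝ → Fin n → ℝ) (u : ℝ → Fin m → ℝ)
    (Q : Matrix (Fin n) (Fin n) ℝ) (hQ : Q.PosSemidef)
    (hxdotL2 : MeasureTheory.MemLp xdot 2 (MeasureTheory.volume.restrict (Set.Icc (0:ℝ) T)))
    (huL2 : MeasureTheory.MemLp u 2 (MeasureTheory.volume.restrict (Set.Icc (0:ℝ) T)))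
    (hAC : ∀ t ∈ Set.Icc (0:ℝ) T, ∀ i, x t i = x 0 i + ∫ s in (0:ℝ)..t, xdot s i)
    (As : Matrix (Fin n) (Fin n) ℝ) (Bs : Matrix (Fin n) (Fin m) ℝ)
    (htrue : (As, Bs) ∈ SigmaCont T xdot x u Q)
    (δ : ℝ) (hδ : 0 < δ) (N : ℕ) (hN : 0 < N) (hTN : T = N * δ)
    :
    ∀ L : ℝ, 0 ≤ L →
      SigmaDisc δ N xdot x u Q ∩ Mset T L xdot x u ⊆
        SigmaCont T xdot x u (Q + (δ * T * L / 2) • (1 : Matrix (Fin n) (Fin n) ℝ)) := by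
  intro L hL AB hAB
  obtain ⟨A, B⟩ := AB
  obtain ⟨hdisc, hlip⟩ := hAB
  set v : ℝ → Fin n → ℝ := noiseSig xdot x u A B with hv
  have hlip' : SqLipschitz T L v := hlip
  have hdisc' : (Q - sampledGram δ N v).PosSemidef := hdisc
  set c : ℝ := δ * T * L / 2 with hc
  set Mt : ℝ → Matrix (Fin n) (Fin n) ℝ := fun t => Matrix.vecMulVec (v t) (v t) with hMt
  -- sample points lie in [0,T]
  have hmem : ∀ k : ℕ, k ≤ N → (k : ℝ) * δ ∈ Set.Icc (0:ℝ) T := by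
    intro k hk
    refine ⟨by positivity, ?_⟩
    rw [hTN]
    have : (k : ℝ) ≤ (N : ℝ) := by exact_mod_cast hk
    nlinarith
  -- entrywise integrability of vvᵀ on Ioc 0 T
  have hentry : ∀ i j, MeasureTheory.IntegrableOn (fun t => v t i * v t j)
      (Set.Ioc (0:ℝ) T) MeasureTheory.volume := by
    intro i j
    have hlipE : LipschitzOnWith (Real.toNNReal L) (fun t => v t i * v t j)
        (Set.Icc (0:ℝ) T) := by
      apply LipschitzOnWith.of_dist_le_mul
      intro t₁ h₁ t₂ h₂
      have h := hlip' t₁ h₁ t₂ h₂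
      have h2 := abs_entry_le (Mt t₁ - Mt t₂) i j
      simp only [hMt, Matrix.sub_apply, Matrix.vecMulVec_apply] at h2
      rw [Real.dist_eq, Real.dist_eq]
      calc |v t₁ i * v t₁ j - v t₂ i * v t₂ j| ≤ opNorm (Mt t₁ - Mt t₂) := h2
        _ ≤ L * |t₁ - t₂| := h
        _ = (Real.toNNReal L : ℝ) * |t₁ - t₂| := by rw [Real.coe_toNNReal L hL]
    exact (hlipE.continuousOn.integrableOn_compact isCompact_Icc).mono_set
      Set.Ioc_subset_Icc_self
  -- hermitian part
  have hMint : (matIntegral T Mt).IsHermitian := by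
    show (matIntegral T Mt)ᴴ = matIntegral T Mt
    ext i j
    simp only [Matrix.conjTranspose_apply, matIntegral, Matrix.of_apply, star_trivial]
    simp only [hMt, Matrix.vecMulVec_apply]
    congr 1; ext t; ring
  have hsmulH : ((c • (1 : Matrix (Fin n) (Fin n) ℝ))).IsHermitian := by
    show _ᴴ = _
    rw [Matrix.conjTranspose_smul, Matrix.conjTranspose_one, star_trivial]
  have hherm : ((Q + c • (1 : Matrix (Fin n) (Fin n) ℝ)) - matIntegral T Mt).IsHermitian :=
    (hQ.1.add hsmulH).sub hMint
  -- main quadratic-form inequality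
  have hquad : ∀ z : Fin n → ℝ,
      0 ≤ z ⬝ᵥ ((Q + c • (1 : Matrix (Fin n) (Fin n) ℝ)) - matIntegral T Mt).mulVec z := by
    intro z
    set S : ℝ := ∑ i, z i ^ 2 with hS
    have hS0 : (0:ℝ) ≤ S := by positivity
    set g : ℝ → ℝ := fun t => z ⬝ᵥ (Mt t).mulVec z with hg
    have hgle : ∀ s ∈ Set.Icc (0:ℝ) T, ∀ t ∈ Set.Icc (0:ℝ) T,
        g t ≤ g s + L * S * |t - s| := by
      intro s hs t ht
      have h1 : g t - g s = z ⬝ᵥ (Mt t - Mt s).mulVec z := by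
        rw [Matrix.sub_mulVec, dotProduct_sub]
      have h2 := abs_quad_le (Mt t - Mt s) z
      have h3 := hlip' t ht s hs
      have h4 : opNorm (Mt t - Mt s) * S ≤ L * |t - s| * S :=
        mul_le_mul_of_nonneg_right h3 hS0
      have h5 : g t - g s ≤ |z ⬝ᵥ (Mt t - Mt s).mulVec z| := h1 ▸ le_abs_self _
      have h6 : L * |t - s| * S = L * S * |t - s| := by ring
      linarith
    have hgcont : ContinuousOn g (Set.Icc (0:ℝ) T) := by
      have : LipschitzOnWith (Real.toNNReal (L * S)) g (Set.Icc (0:ℝ) T) := by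
        apply LipschitzOnWith.of_dist_le_mul
        intro t₁ h₁ t₂ h₂
        have hco : (Real.toNNReal (L * S) : ℝ) = L * S :=
          Real.coe_toNNReal _ (by positivity)
        rw [Real.dist_eq, Real.dist_eq, hco, abs_sub_le_iff]
        have e1 := hgle t₂ h₂ t₁ h₁
        have e2 := hgle t₁ h₁ t₂ h₂
        have habs : |t₂ - t₁| = |t₁ - t₂| := abs_sub_comm _ _
        rw [habs] at e2
        constructor <;> linarith
      exact this.continuousOn
    have hgint : ∀ a b : ℝ, a ∈ Set.Icc (0:ℝ) T → b ∈ Set.Icc (0:ℝ) T →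
        IntervalIntegrable g MeasureTheory.volume a b := by
      intro a b ha hb
      exact (hgcont.mono (Set.uIcc_subset_Icc ha hb)).intervalIntegrable
    -- per-interval bound
    have hpiece : ∀ k : ℕ, k < N →
        (∫ t in ((k:ℝ) * δ)..(((k:ℕ)+1 : ℕ) : ℝ) * δ, g t) ≤
          δ * g ((k:ℝ) * δ) + L * S * δ ^ 2 / 2 := by
      intro k hk
      have hk1 : ((k:ℝ) * δ) ∈ Set.Icc (0:ℝ) T := hmem k hk.le
      have hk2 : ((((k:ℕ)+1 : ℕ)) : ℝ) * δ ∈ Set.Icc (0:ℝ) T := hmem (k+1) hk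
      have hcast : ((((k:ℕ)+1 : ℕ)) : ℝ) * δ = (k:ℝ) * δ + δ := by push_cast; ring
      have hle : (k:ℝ) * δ ≤ (k:ℝ) * δ + δ := by linarith
      have hub : ∀ t ∈ Set.Icc ((k:ℝ) * δ) ((k:ℝ) * δ + δ),
          g t ≤ g ((k:ℝ) * δ) + L * S * (t - (k:ℝ) * δ) := by
        intro t ht
        have htm : t ∈ Set.Icc (0:ℝ) T := by
          constructor
          · exact le_trans hk1.1 ht.1
          · exact le_trans ht.2 (hcast ▸ hk2.2)
        have := hgle ((k:ℝ) * δ) hk1 t htm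
        rwa [abs_of_nonneg (by linarith [ht.1])] at this
      have hcontU : Continuous fun t : ℝ => g ((k:ℝ) * δ) + L * S * (t - (k:ℝ) * δ) :=
        continuous_const.add (continuous_const.mul (continuous_id.sub continuous_const))
      have hmono : (∫ t in ((k:ℝ) * δ)..((k:ℝ) * δ + δ), g t) ≤
          ∫ t in ((k:ℝ) * δ)..((k:ℝ) * δ + δ),
            (g ((k:ℝ) * δ) + L * S * (t - (k:ℝ) * δ)) := by
        apply intervalIntegral.integral_mono_on hle
          (by rw [← hcast]; exact hgint _ _ hk1 hk2)
          (hcontU.intervalIntegrable _ _)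
        exact hub
      have hval : (∫ t in ((k:ℝ) * δ)..((k:ℝ) * δ + δ),
          (g ((k:ℝ) * δ) + L * S * (t - (k:ℝ) * δ))) =
          δ * g ((k:ℝ) * δ) + L * S * δ ^ 2 / 2 := by
        rw [intervalIntegral.integral_add (intervalIntegrable_const)
          (show IntervalIntegrable (fun t : ℝ => L * S * (t - (k:ℝ) * δ)) MeasureTheory.volume _ _ from
            ((continuous_const.mul (continuous_sub_right ((k:ℝ) * δ)))).intervalIntegrable _ _),
          intervalIntegral.integral_const, intervalIntegral.integral_const_mul]
        have : (∫ t in ((k:ℝ) * δ)..((k:ℝ) * δ + δ), (t - (k:ℝ) * δ)) = δ ^ 2 / 2 := by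
          rw [intervalIntegral.integral_sub (show IntervalIntegrable (fun t : ℝ => t)
              MeasureTheory.volume ((k:ℝ) * δ) ((k:ℝ) * δ + δ) from
              continuous_id.intervalIntegrable _ _)
            (intervalIntegrable_const), integral_id, intervalIntegral.integral_const]
          simp only [smul_eq_mul]
          ring
        rw [this]
        simp only [smul_eq_mul]
        ring
      rw [hcast]
      calc (∫ t in ((k:ℝ) * δ)..((k:ℝ) * δ + δ), g t) ≤ _ := hmono
        _ = _ := hval
    -- sum over pieces
    have hints : ∀ k < N, IntervalIntegrable g MeasureTheory.volume
        ((fun j : ℕ => (j:ℝ) * δ) k) ((fun j : ℕ => (j:ℝ) * δ) (k+1)) := by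
      intro k hk
      exact hgint _ _ (hmem k hk.le) (hmem (k+1) hk)
    have hsum := intervalIntegral.sum_integral_adjacent_intervals
      (μ := MeasureTheory.volume) (f := g) (a := fun j : ℕ => (j:ℝ) * δ) (n := N) hints
    have ha0 : ((0:ℕ) : ℝ) * δ = 0 := by simp
    have haN : ((N:ℕ) : ℝ) * δ = T := by rw [hTN]
    have hintT : (∫ t in Set.Ioc (0:ℝ) T, g t) ≤
        δ * ∑ k ∈ Finset.range N, g ((k:ℝ) * δ) + (N : ℝ) * (L * S * δ ^ 2 / 2) := by
      rw [← intervalIntegral.integral_of_le hT.le]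
      have : (∫ t in (0:ℝ)..T, g t) = ∑ k ∈ Finset.range N,
          ∫ t in ((k:ℝ) * δ)..(((k:ℕ)+1 : ℕ) : ℝ) * δ, g t := by
        rw [hsum]; simp only [ha0, haN]
      rw [this]
      calc (∑ k ∈ Finset.range N, ∫ t in ((k:ℝ) * δ)..(((k:ℕ)+1 : ℕ) : ℝ) * δ, g t)
          ≤ ∑ k ∈ Finset.range N, (δ * g ((k:ℝ) * δ) + L * S * δ ^ 2 / 2) :=
            Finset.sum_le_sum (fun k hk => hpiece k (Finset.mem_range.mp hk))
        _ = δ * ∑ k ∈ Finset.range N, g ((k:ℝ) * δ) + (N : ℝ) * (L * S * δ ^ 2 / 2) := by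
            rw [Finset.sum_add_distrib, Finset.sum_const, Finset.card_range,
              nsmul_eq_mul, ← Finset.mul_sum]
    -- quadratic form of the matrix integral
    have hswap : z ⬝ᵥ (matIntegral T Mt).mulVec z = ∫ t in Set.Ioc (0:ℝ) T, g t := by
      have step1 : z ⬝ᵥ (matIntegral T Mt).mulVec z =
          ∑ i, ∑ j, z i * ((∫ t in Set.Ioc (0:ℝ) T, v t i * v t j) * z j) := by
        simp [matIntegral, dotProduct, Matrix.mulVec, Finset.mul_sum, hMt,
          Matrix.vecMulVec_apply]
      have step2 : ∀ i j, z i * ((∫ t in Set.Ioc (0:ℝ) T, v t i * v t j) * z j) =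
          ∫ t in Set.Ioc (0:ℝ) T, z i * (v t i * v t j * z j) := by
        intro i j
        rw [MeasureTheory.integral_const_mul, MeasureTheory.integral_mul_const]
      have step3 : (∑ i, ∑ j, ∫ t in Set.Ioc (0:ℝ) T, z i * (v t i * v t j * z j)) =
          ∫ t in Set.Ioc (0:ℝ) T, ∑ i, ∑ j, z i * (v t i * v t j * z j) := by
        symm
        rw [MeasureTheory.integral_finset_sum _ (fun i _ =>
          MeasureTheory.integrable_finset_sum _ (fun j _ =>
            ((hentry i j).mul_const (z j)).const_mul (z i)))]
        refine Finset.sum_congr rfl fun i _ => ?_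
        rw [MeasureTheory.integral_finset_sum _ (fun j _ =>
          ((hentry i j).mul_const (z j)).const_mul (z i))]
      calc z ⬝ᵥ (matIntegral T Mt).mulVec z
          = ∑ i, ∑ j, z i * ((∫ t in Set.Ioc (0:ℝ) T, v t i * v t j) * z j) := step1
        _ = ∑ i, ∑ j, ∫ t in Set.Ioc (0:ℝ) T, z i * (v t i * v t j * z j) :=
            Finset.sum_congr rfl fun i _ => Finset.sum_congr rfl fun j _ => step2 i j
        _ = ∫ t in Set.Ioc (0:ℝ) T, ∑ i, ∑ j, z i * (v t i * v t j * z j) := step3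
        _ = ∫ t in Set.Ioc (0:ℝ) T, g t := by
            congr 1
            funext t
            simp only [hg, hMt, dotProduct, Matrix.mulVec, Matrix.vecMulVec_apply,
              Finset.mul_sum, mul_assoc]
    -- quadratic form of the sampled Gram matrix
    have hsamp : z ⬝ᵥ (sampledGram δ N v).mulVec z =
        δ * ∑ k ∈ Finset.range N, g ((k:ℝ) * δ) := by
      have hWsum : ∀ i, ((∑ k ∈ Finset.range N,
          Matrix.vecMulVec (v ((k:ℝ) * δ)) (v ((k:ℝ) * δ))) *ᵥ z) i =
          ∑ k ∈ Finset.range N,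
            ((Matrix.vecMulVec (v ((k:ℝ) * δ)) (v ((k:ℝ) * δ))) *ᵥ z) i := by
        intro i
        simp only [Matrix.mulVec, dotProduct, Matrix.sum_apply, Finset.sum_mul]
        exact Finset.sum_comm
      simp only [sampledGram, Matrix.smul_mulVec, dotProduct_smul, smul_eq_mul]
      congr 1
      calc z ⬝ᵥ ((∑ k ∈ Finset.range N,
            Matrix.vecMulVec (v ((k:ℝ) * δ)) (v ((k:ℝ) * δ))) *ᵥ z)
          = ∑ i, z i * ∑ k ∈ Finset.range N,
              ((Matrix.vecMulVec (v ((k:ℝ) * δ)) (v ((k:ℝ) * δ))) *ᵥ z) i := by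
            simp only [dotProduct]
            exact Finset.sum_congr rfl fun i _ => by rw [hWsum i]
        _ = ∑ k ∈ Finset.range N, ∑ i, z i *
              ((Matrix.vecMulVec (v ((k:ℝ) * δ)) (v ((k:ℝ) * δ))) *ᵥ z) i := by
            simp only [Finset.mul_sum]
            exact Finset.sum_comm
        _ = ∑ k ∈ Finset.range N, g ((k:ℝ) * δ) := by
            refine Finset.sum_congr rfl fun k _ => ?_
            simp only [hg, hMt, dotProduct]
    -- expand the quadratic form and conclude
    have hone : z ⬝ᵥ ((c • (1 : Matrix (Fin n) (Fin n) ℝ)) *ᵥ z) = c * S := by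
      simp only [Matrix.smul_mulVec, dotProduct_smul, Matrix.one_mulVec,
        smul_eq_mul, hS]
      congr 1
      simp [dotProduct, sq]
    have hexp : z ⬝ᵥ ((Q + c • (1 : Matrix (Fin n) (Fin n) ℝ)) - matIntegral T Mt).mulVec z =
        z ⬝ᵥ Q.mulVec z + c * S - ∫ t in Set.Ioc (0:ℝ) T, g t := by
      rw [Matrix.sub_mulVec, dotProduct_sub, Matrix.add_mulVec, dotProduct_add,
        hone, hswap]
    have hQz : 0 ≤ z ⬝ᵥ Q.mulVec z - δ * ∑ k ∈ Finset.range N, g ((k:ℝ) * δ) := by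
      have := hdisc'.dotProduct_mulVec_nonneg z
      rw [star_trivial, Matrix.sub_mulVec, dotProduct_sub, hsamp] at this
      linarith
    have hcS : c * S = (N : ℝ) * (L * S * δ ^ 2 / 2) := by
      rw [hc, hTN]; ring
    rw [hexp]
    linarith
  exact Matrix.PosSemidef.of_dotProduct_mulVec_nonneg hherm (fun z => by rw [star_trivial]; exact hquad z)
end

section
/- Suppose the data (x,u) satisfy the standing data assumptions and let λ ≥ 1 be such that A·A^T + B·B^T < (λ−1)·I_n (strict Loewner inequality, i.e., (λ−1)I_n − AA^T − BB^T is positive definite) for every (A,B) ∈ Σ(Q). If the stacked signal ξ(t) := (ẋ(t); −x(t); −u(t)) ∈ ℝ^{2n+m} is L-square Lipschitz for some L ≥ 0, then for every (A,B) ∈ Σ(Q) the signal ẋ − Ax − Bu is λL-square Lipschitz; that is, Σ(Q) ⊆ M^{λL}_{x,u}. -/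
open MeasureTheory Matrix

section Stmt13Aux

open scoped Matrix.Norms.L2Operator

lemma opNorm_eq_l2 {ι κ : Type} [Fintype ι] [Fintype κ] [DecidableEq κ] (M : Matrix ι κ ℝ) :
    opNorm M = ‖M‖ := rfl

lemma transpose_eq_conj13 {ι κ : Type} (M : Matrix ι κ ℝ) : M.transpose = M.conjTranspose := by
  ext i j; simp [Matrix.conjTranspose_apply]

lemma norm_transpose13 {ι κ : Type} [Fintype ι] [Fintype κ] [DecidableEq ι] [DecidableEq κ]
    (M : Matrix ι κ ℝ) : ‖M.transpose‖ = ‖M‖ := by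
  rw [transpose_eq_conj13]; exact Matrix.l2_opNorm_conjTranspose M

set_option maxHeartbeats 2000000 in
lemma norm_transpose_le_sqrt13 {ι κ : Type} [Fintype ι] [Fintype κ] [DecidableEq ι] [DecidableEq κ]
    (M : Matrix ι κ ℝ) (lam : ℝ) (hlam : 0 ≤ lam)
    (h : (lam • (1 : Matrix ι ι ℝ) - M * M.transpose).PosSemidef) :
    ‖M.transpose‖ ≤ Real.sqrt lam := by
  rw [Matrix.l2_opNorm_def]
  apply ContinuousLinearMap.opNorm_le_bound _ (Real.sqrt_nonneg lam)
  intro v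
  set w : ι → ℝ := (WithLp.equiv 2 (ι → ℝ)) v with hw
  have h1 : ‖((toEuclideanLin ≪≫ₗ LinearMap.toContinuousLinearMap) M.transpose) v‖ ^ 2
      = w ⬝ᵥ ((M * M.transpose) *ᵥ w) := by
    have happ : ((toEuclideanLin ≪≫ₗ LinearMap.toContinuousLinearMap) M.transpose) v
        = (WithLp.equiv 2 (κ → ℝ)).symm (M.transpose *ᵥ w) := rfl
    rw [happ, EuclideanSpace.norm_eq, Real.sq_sqrt (by positivity)]
    simp only [WithLp.equiv_symm_apply, PiLp.toLp_apply, Real.norm_eq_abs, sq_abs]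
    calc ∑ j : κ, ((M.transpose *ᵥ w) j) ^ 2
        = ∑ j : κ, ∑ a : ι, ∑ b : ι, (M a j * w a) * (M b j * w b) := by
          refine Finset.sum_congr rfl fun j _ => ?_
          rw [pow_two]
          simp only [Matrix.mulVec, dotProduct, Matrix.transpose_apply]
          rw [Finset.sum_mul_sum]
      _ = ∑ a : ι, ∑ j : κ, ∑ b : ι, (M a j * w a) * (M b j * w b) := Finset.sum_comm
      _ = ∑ a : ι, ∑ b : ι, ∑ j : κ, (M a j * w a) * (M b j * w b) :=
          Finset.sum_congr rfl fun a _ => Finset.sum_comm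
      _ = ∑ b : ι, ∑ a : ι, ∑ j : κ, (M a j * w a) * (M b j * w b) := Finset.sum_comm
      _ = w ⬝ᵥ ((M * M.transpose) *ᵥ w) := by
          simp only [dotProduct, Matrix.mulVec, Matrix.mul_apply,
            Matrix.transpose_apply, Finset.sum_mul, Finset.mul_sum]
          refine Finset.sum_congr rfl fun b _ => Finset.sum_congr rfl fun a _ =>
            Finset.sum_congr rfl fun j _ => by ring
  have h2 : w ⬝ᵥ ((M * M.transpose) *ᵥ w) ≤ lam * ‖v‖ ^ 2 := by
    have hps := h.dotProduct_mulVec_nonneg w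
    simp only [star_trivial] at hps
    rw [Matrix.sub_mulVec, dotProduct_sub, sub_nonneg, Matrix.smul_mulVec,
      Matrix.one_mulVec, dotProduct_smul] at hps
    refine hps.trans (le_of_eq ?_)
    rw [smul_eq_mul]
    congr 1
    rw [EuclideanSpace.norm_eq, Real.sq_sqrt (by positivity)]
    simp [dotProduct, pow_two, hw]
  have hnn : (0:ℝ) ≤ ‖((toEuclideanLin ≪≫ₗ LinearMap.toContinuousLinearMap) M.transpose) v‖ :=
    norm_nonneg _
  nlinarith [Real.sq_sqrt hlam, Real.sqrt_nonneg lam, norm_nonneg v,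
    mul_nonneg (Real.sqrt_nonneg lam) (norm_nonneg v)]

/-- The stacked matrix `[I, A, B]`. -/
noncomputable def stk13 {n m : ℕ} (A : Matrix (Fin n) (Fin n) ℝ) (B : Matrix (Fin n) (Fin m) ℝ) :
    Matrix (Fin n) (Fin n ⊕ (Fin n ⊕ Fin m)) ℝ :=
  Matrix.of fun i jj => Sum.elim ((1 : Matrix (Fin n) (Fin n) ℝ) i) (Sum.elim (A i) (B i)) jj

lemma noiseSig_eq13 {n m : ℕ} (xdot x : ℝ → Fin n → ℝ) (u : ℝ → Fin m → ℝ)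
    (A : Matrix (Fin n) (Fin n) ℝ) (B : Matrix (Fin n) (Fin m) ℝ) (t : ℝ) :
    noiseSig xdot x u A B t = (stk13 A B).mulVec (xiSig xdot x u t) := by
  funext i
  simp [noiseSig, stk13, xiSig, Matrix.mulVec, dotProduct, Fintype.sum_sum_type,
    Matrix.one_apply, ite_mul, mul_neg, sub_eq_add_neg, Finset.sum_add_distrib]
  ring

lemma vecMulVec_mulVec13 {ι κ : Type} [Fintype ι] [Fintype κ]
    (M : Matrix ι κ ℝ) (v : κ → ℝ) :
    Matrix.vecMulVec (M *ᵥ v) (M *ᵥ v) = M * Matrix.vecMulVec v v * M.transpose := by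
  ext i j
  rw [Matrix.vecMulVec_apply]
  calc (M *ᵥ v) i * (M *ᵥ v) j
      = ∑ k, ∑ l, (M i k * v k) * (M j l * v l) := by
        simp only [Matrix.mulVec, dotProduct]
        rw [Finset.sum_mul_sum]
    _ = ∑ k, ∑ l, M i k * (v k * v l) * M j l :=
        Finset.sum_congr rfl fun k _ => Finset.sum_congr rfl fun l _ => by ring
    _ = ∑ l, ∑ k, M i k * (v k * v l) * M j l := Finset.sum_comm
    _ = (M * Matrix.vecMulVec v v * M.transpose) i j := by
        simp only [Matrix.mul_apply, Matrix.vecMulVec_apply, Matrix.transpose_apply,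
          Finset.sum_mul]

lemma stk_mul_transpose13 {n m : ℕ} (A : Matrix (Fin n) (Fin n) ℝ)
    (B : Matrix (Fin n) (Fin m) ℝ) :
    stk13 A B * (stk13 A B).transpose = 1 + A * A.transpose + B * B.transpose := by
  ext i j
  simp [stk13, Matrix.mul_apply, Matrix.transpose_apply, Fintype.sum_sum_type,
    Matrix.one_apply, ite_mul, mul_ite, Matrix.add_apply]
  ring

end Stmt13Aux

open scoped Matrix.Norms.L2Operator in
theorem stmt13
    {n m : ℕ} (T : ℝ) (hT : 0 < T)
    (x xdot : ℝ → Fin n → ℝ) (u : ℝ → Fin m → ℝ)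
    (Q : Matrix (Fin n) (Fin n) ℝ) (hQ : Q.PosSemidef)
    (hxdotL2 : MeasureTheory.MemLp xdot 2 (MeasureTheory.volume.restrict (Set.Icc (0:ℝ) T)))
    (huL2 : MeasureTheory.MemLp u 2 (MeasureTheory.volume.restrict (Set.Icc (0:ℝ) T)))
    (hAC : ∀ t ∈ Set.Icc (0:ℝ) T, ∀ i, x t i = x 0 i + ∫ s in (0:ℝ)..t, xdot s i)
    (As : Matrix (Fin n) (Fin n) ℝ) (Bs : Matrix (Fin n) (Fin m) ℝ)
    (htrue : (As, Bs) ∈ SigmaCont T xdot x u Q)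
    (lam : ℝ) (hlam : 1 ≤ lam)
    (hbd : ∀ AB ∈ SigmaCont T xdot x u Q,
      loewnerLT (AB.1 * AB.1.transpose + AB.2 * AB.2.transpose)
        ((lam - 1) • (1 : Matrix (Fin n) (Fin n) ℝ)))
    (L : ℝ) (hL : 0 ≤ L)
    (hxi : SqLipschitz T L (xiSig xdot x u)) :
    SigmaCont T xdot x u Q ⊆ Mset T (lam * L) xdot x u := by
  intro AB hAB
  obtain ⟨A, B⟩ := AB
  simp only [Mset, Set.mem_setOf_eq, SqLipschitz]
  intro t₁ ht₁ t₂ ht₂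
  have hd := hbd (A, B) hAB
  have hlam0 : (0:ℝ) ≤ lam := by linarith
  have hps : (lam • (1 : Matrix (Fin n) (Fin n) ℝ)
      - stk13 A B * (stk13 A B).transpose).PosSemidef := by
    have h1 : lam • (1 : Matrix (Fin n) (Fin n) ℝ) - stk13 A B * (stk13 A B).transpose
        = (lam - 1) • (1 : Matrix (Fin n) (Fin n) ℝ)
          - (A * A.transpose + B * B.transpose) := by
      rw [stk_mul_transpose13, sub_smul, one_smul]; abel
    rw [h1]
    exact hd.posSemidef
  have hMT : ‖(stk13 A B).transpose‖ ≤ Real.sqrt lam :=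
    norm_transpose_le_sqrt13 _ lam hlam0 hps
  have hM : ‖stk13 A B‖ ≤ Real.sqrt lam := (norm_transpose13 (stk13 A B)) ▸ hMT
  set D : Matrix (Fin n ⊕ (Fin n ⊕ Fin m)) (Fin n ⊕ (Fin n ⊕ Fin m)) ℝ :=
    Matrix.vecMulVec (xiSig xdot x u t₁) (xiSig xdot x u t₁) -
      Matrix.vecMulVec (xiSig xdot x u t₂) (xiSig xdot x u t₂) with hD
  have hfac : Matrix.vecMulVec (noiseSig xdot x u A B t₁) (noiseSig xdot x u A B t₁) -
      Matrix.vecMulVec (noiseSig xdot x u A B t₂) (noiseSig xdot x u A B t₂)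
      = stk13 A B * D * (stk13 A B).transpose := by
    rw [hD, noiseSig_eq13, noiseSig_eq13, vecMulVec_mulVec13, vecMulVec_mulVec13,
      Matrix.mul_sub, Matrix.sub_mul]
  have hxi' := hxi t₁ ht₁ t₂ ht₂
  rw [opNorm_eq_l2] at hxi'
  rw [hfac, opNorm_eq_l2]
  have hDnn : (0:ℝ) ≤ L * |t₁ - t₂| := mul_nonneg hL (abs_nonneg _)
  calc ‖stk13 A B * D * (stk13 A B).transpose‖
      ≤ ‖stk13 A B * D‖ * ‖(stk13 A B).transpose‖ := Matrix.l2_opNorm_mul _ _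
    _ ≤ (‖stk13 A B‖ * ‖D‖) * ‖(stk13 A B).transpose‖ :=
        mul_le_mul_of_nonneg_right (Matrix.l2_opNorm_mul _ _) (norm_nonneg _)
    _ ≤ (Real.sqrt lam * (L * |t₁ - t₂|)) * Real.sqrt lam :=
        mul_le_mul (mul_le_mul hM hxi' (norm_nonneg _) (Real.sqrt_nonneg _)) hMT
          (norm_nonneg _) (by positivity)
    _ = (Real.sqrt lam * Real.sqrt lam) * (L * |t₁ - t₂|) := by ring
    _ = lam * L * |t₁ - t₂| := by rw [Real.mul_self_sqrt hlam0]; ring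
end
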